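/- For fixed b > 0, the first-order Marcum Q-function a ↦ Q₁(a, b) = ∫_b^∞ x exp(−(x²+a²)/2) I₀(a x) dx is monotonically non-decreasing in a ≥ 0. -/

import Mathlib

open Real MeasureTheory Set

/-- Modified Bessel function of the first kind of nonnegative integer order `ν`,
defined by its power series. -/
noncomputable def besselI (ν : ℕ) (x : ℝ) : ℝ :=
  ∑' k : ℕ, (x / 2) ^ (2 * k + ν) / ((Nat.factorial k : ℝ) * (Nat.factorial (k + ν) : ℝ))

/-- First-order Marcum Q-function `Q₁(a,b) = ∫_b^∞ x e^{-(x²+a²)/2} I₀(ax) dx`. -/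
noncomputable def marcumQ1 (a b : ℝ) : ℝ :=
  ∫ x in Ici b, x * Real.exp (-(x ^ 2 + a ^ 2) / 2) * besselI 0 (a * x)

/-- Poisson weight `e^{-t} t^k / k!`. -/
noncomputable def pois (t : ℝ) (k : ℕ) : ℝ := Real.exp (-t) * t ^ k / (Nat.factorial k : ℝ)

/-- Partial sum of Poisson weights. -/
noncomputable def ppart (j : ℕ) (t : ℝ) : ℝ := ∑ k ∈ Finset.range j, pois t k

lemma pois_nonneg {t : ℝ} (ht : 0 ≤ t) (k : ℕ) : 0 ≤ pois t k := by
  unfold pois; positivity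

lemma exp_tsum (t : ℝ) : ∑' k : ℕ, t ^ k / (Nat.factorial k : ℝ) = Real.exp t := by
  rw [Real.exp_eq_exp_ℝ, NormedSpace.exp_eq_tsum_div]

lemma summable_pois (t : ℝ) : Summable (pois t) := by
  have := (Real.summable_pow_div_factorial t).mul_left (Real.exp (-t))
  apply this.congr; intro k; simp [pois, mul_div_assoc]

lemma tsum_pois (t : ℝ) : ∑' k, pois t k = 1 := by
  have h : ∑' k : ℕ, pois t k = Real.exp (-t) * ∑' k : ℕ, t ^ k / (Nat.factorial k : ℝ) := by
    rw [← tsum_mul_left]; apply tsum_congr; intro k; simp [pois, mul_div_assoc]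
  rw [h, exp_tsum, ← Real.exp_add]; simp

lemma ppart_nonneg {t : ℝ} (ht : 0 ≤ t) (j : ℕ) : 0 ≤ ppart j t :=
  Finset.sum_nonneg fun k _ => pois_nonneg ht k

lemma ppart_le_one {t : ℝ} (ht : 0 ≤ t) (j : ℕ) : ppart j t ≤ 1 := by
  rw [← tsum_pois t]
  exact Summable.sum_le_tsum (Finset.range j) (fun k _ => pois_nonneg ht k) (summable_pois t)

lemma hasDerivAt_pois_zero (t : ℝ) : HasDerivAt (fun t => pois t 0) (-pois t 0) t := by
  simp only [pois, pow_zero, Nat.factorial_zero, Nat.cast_one, mul_one, div_one]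
  simpa [Function.comp_def] using (Real.hasDerivAt_exp (-t)).comp t (hasDerivAt_neg t)

lemma hasDerivAt_pois_succ (t : ℝ) (k : ℕ) :
    HasDerivAt (fun t => pois t (k+1)) (pois t k - pois t (k+1)) t := by
  have h1 : HasDerivAt (fun t : ℝ => Real.exp (-t)) (-Real.exp (-t)) t := by
    simpa [Function.comp_def] using (Real.hasDerivAt_exp (-t)).comp t (hasDerivAt_neg t)
  have h2 : HasDerivAt (fun t : ℝ => t ^ (k+1)) ((k+1 : ℕ) * t ^ k) t := hasDerivAt_pow (k+1) t
  have h3 := (h1.mul h2).div_const ((k+1).factorial : ℝ)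
  apply h3.congr_deriv
  have hk : ((k+1).factorial : ℝ) = (k+1) * (k.factorial : ℝ) := by
    push_cast [Nat.factorial_succ]; ring
  simp only [pois]
  rw [hk]
  push_cast
  field_simp
  ring

lemma hasDerivAt_ppart (j : ℕ) (t : ℝ) :
    HasDerivAt (ppart (j+1)) (-pois t j) t := by
  induction j with
  | zero =>
    have h := hasDerivAt_pois_zero t
    have he : (fun t => pois t 0) = ppart 1 := by funext s; simp [ppart]
    rwa [he] at h
  | succ j ih =>
    have h : HasDerivAt (fun t => ppart (j+1) t + pois t (j+1))
        (-pois t j + (pois t j - pois t (j+1))) t := ih.add (hasDerivAt_pois_succ t j)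
    have he : (fun t => ppart (j+1) t + pois t (j+1)) = ppart (j+2) := by
      funext s; simp [ppart, Finset.sum_range_succ]
    rw [he] at h
    convert h using 1; ring

lemma ppart_antitone (j : ℕ) : AntitoneOn (ppart j) (Ici (0:ℝ)) := by
  cases j with
  | zero => intro x _ y _ _; simp [ppart]
  | succ j =>
    apply antitoneOn_of_deriv_nonpos (convex_Ici 0)
    · exact fun t _ => (hasDerivAt_ppart j t).continuousAt.continuousWithinAt
    · exact fun t _ => (hasDerivAt_ppart j t).differentiableAt.differentiableWithinAt
    · intro t ht
      rw [interior_Ici] at ht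
      rw [(hasDerivAt_ppart j t).deriv]
      simp only [neg_nonpos]
      exact pois_nonneg (le_of_lt ht) j

/-- Antiderivative for the incomplete-gamma style integral. -/
noncomputable def Gfun (k : ℕ) (x : ℝ) : ℝ :=
  -(Real.exp (-(x^2/2)) * ∑ j ∈ Finset.range (k+1),
      ((Nat.factorial k : ℝ)/(Nat.factorial j : ℝ)) * (x^2/2)^j)

lemma telescope (k : ℕ) (w : ℝ) :
    (∑ j ∈ Finset.range (k+1), ((Nat.factorial k : ℝ)/(Nat.factorial j : ℝ)) * w^j)
      - (∑ j ∈ Finset.range (k+1),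
          ((Nat.factorial k : ℝ)/(Nat.factorial j : ℝ)) * j * w^(j-1)) = w^k := by
  have h2 : (∑ j ∈ Finset.range (k+1),
      ((Nat.factorial k : ℝ)/(Nat.factorial j : ℝ)) * j * w^(j-1))
      = ∑ i ∈ Finset.range k, ((Nat.factorial k : ℝ)/(Nat.factorial i : ℝ)) * w^i := by
    rw [Finset.sum_range_succ']
    simp only [Nat.cast_zero, mul_zero, zero_mul, add_zero]
    apply Finset.sum_congr rfl
    intro i _
    have : ((Nat.factorial (i+1) : ℝ)) = (i+1) * (Nat.factorial i : ℝ) := by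
      push_cast [Nat.factorial_succ]; ring
    rw [this]
    have hi : (Nat.factorial i : ℝ) ≠ 0 := Nat.cast_ne_zero.2 (Nat.factorial_ne_zero i)
    field_simp
    simp only [Nat.add_sub_cancel]
    push_cast
    ring
  rw [h2, Finset.sum_range_succ]
  simp [Nat.factorial_ne_zero, div_self]

lemma hasDerivAt_Gfun (k : ℕ) (x : ℝ) :
    HasDerivAt (Gfun k) (x * Real.exp (-(x^2/2)) * (x^2/2)^k) x := by
  have hw : HasDerivAt (fun x : ℝ => x^2/2) x x := by
    simpa using (hasDerivAt_pow 2 x).div_const 2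
  have hexp : HasDerivAt (fun x : ℝ => Real.exp (-(x^2/2))) (-x * Real.exp (-(x^2/2))) x := by
    have := (Real.hasDerivAt_exp (-(x^2/2))).comp x (hw.neg)
    simpa [mul_comm, Function.comp_def, Pi.neg_def] using this
  have hsum : HasDerivAt (fun x : ℝ => ∑ j ∈ Finset.range (k+1),
      ((Nat.factorial k : ℝ)/(Nat.factorial j : ℝ)) * (x^2/2)^j)
      (∑ j ∈ Finset.range (k+1),
        ((Nat.factorial k : ℝ)/(Nat.factorial j : ℝ)) * j * (x^2/2)^(j-1) * x) x := by
    apply HasDerivAt.fun_sum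
    intro j _
    have hp : HasDerivAt (fun x : ℝ => (x^2/2)^j) (j * (x^2/2)^(j-1) * x) x :=
      (hasDerivAt_pow j (x^2/2)).comp x hw
    have := hp.const_mul ((Nat.factorial k : ℝ)/(Nat.factorial j : ℝ))
    exact this.congr_deriv (by ring)
  have h := ((hexp.mul hsum).neg)
  apply h.congr_deriv
  have ht := telescope k (x^2/2)
  set S := ∑ j ∈ Finset.range (k+1), ((Nat.factorial k : ℝ)/(Nat.factorial j : ℝ)) * (x^2/2)^j
  set D := ∑ j ∈ Finset.range (k+1),
    ((Nat.factorial k : ℝ)/(Nat.factorial j : ℝ)) * j * (x^2/2)^(j-1)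
  have hD : (∑ j ∈ Finset.range (k+1),
      ((Nat.factorial k : ℝ)/(Nat.factorial j : ℝ)) * j * (x^2/2)^(j-1) * x) = D * x := by
    rw [Finset.sum_mul]
  rw [hD]
  have : (x^2/2)^k = S - D := ht.symm
  rw [this]; ring

open Filter in
lemma tendsto_Gfun (k : ℕ) : Tendsto (Gfun k) atTop (nhds 0) := by
  have hw : Tendsto (fun x : ℝ => x^2/2) atTop atTop :=
    (tendsto_pow_atTop (two_ne_zero)).atTop_div_const (by norm_num)
  have hterm : ∀ j : ℕ, Tendsto (fun u : ℝ => Real.exp (-u) * u^j) atTop (nhds 0) := by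
    intro j
    have := tendsto_pow_mul_exp_neg_atTop_nhds_zero j
    simpa [mul_comm] using this
  have hS : Tendsto (fun u : ℝ => -(Real.exp (-u) * ∑ j ∈ Finset.range (k+1),
      ((Nat.factorial k : ℝ)/(Nat.factorial j : ℝ)) * u^j)) atTop (nhds 0) := by
    have : Tendsto (fun u : ℝ => ∑ j ∈ Finset.range (k+1),
        ((Nat.factorial k : ℝ)/(Nat.factorial j : ℝ)) * (Real.exp (-u) * u^j)) atTop (nhds 0) := by
      have := tendsto_finset_sum (Finset.range (k+1))
        (fun j _ => ((hterm j).const_mul ((Nat.factorial k : ℝ)/(Nat.factorial j : ℝ))))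
      simpa using this
    have h2 : (fun u : ℝ => ∑ j ∈ Finset.range (k+1),
        ((Nat.factorial k : ℝ)/(Nat.factorial j : ℝ)) * (Real.exp (-u) * u^j))
        = fun u : ℝ => Real.exp (-u) * ∑ j ∈ Finset.range (k+1),
        ((Nat.factorial k : ℝ)/(Nat.factorial j : ℝ)) * u^j := by
      funext u; rw [Finset.mul_sum]; apply Finset.sum_congr rfl; intro j _; ring
    rw [h2] at this
    simpa using this.neg
  have := hS.comp hw
  unfold Gfun
  simpa [Function.comp_def] using this

lemma integrableOn_fk {b : ℝ} (hb : 0 < b) (k : ℕ) :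
    IntegrableOn (fun x => x * Real.exp (-(x^2/2)) * (x^2/2)^k) (Ioi b) := by
  apply integrableOn_Ioi_deriv_of_nonneg' (fun x _ => hasDerivAt_Gfun k x)
    (fun x hx => ?_) (tendsto_Gfun k)
  have hx0 : (0:ℝ) < x := lt_trans hb hx
  positivity

lemma integral_fk {b : ℝ} (hb : 0 < b) (k : ℕ) :
    ∫ x in Ioi b, x * Real.exp (-(x^2/2)) * (x^2/2)^k
      = (Nat.factorial k : ℝ) * ppart (k+1) (b^2/2) := by
  rw [integral_Ioi_of_hasDerivAt_of_nonneg' (fun x _ => hasDerivAt_Gfun k x)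
    (fun x hx => by have hx0 : (0:ℝ) < x := lt_trans hb hx; positivity) (tendsto_Gfun k)]
  simp only [Gfun, zero_sub, neg_neg]
  rw [ppart, Finset.mul_sum, Finset.mul_sum]
  apply Finset.sum_congr rfl
  intro j _
  rw [pois]
  field_simp

/-- The k-th term of the expanded integrand. -/
noncomputable def gterm (a : ℝ) (k : ℕ) (x : ℝ) : ℝ :=
  (pois (a^2/2) k / (Nat.factorial k : ℝ)) * (x * Real.exp (-(x^2/2)) * (x^2/2)^k)

lemma integrand_eq_tsum (a x : ℝ) :
    x * Real.exp (-(x ^ 2 + a ^ 2) / 2) * besselI 0 (a * x) = ∑' k, gterm a k x := by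
  rw [besselI, ← tsum_mul_left]
  apply tsum_congr
  intro k
  have hfac : (Nat.factorial k : ℝ) ≠ 0 := Nat.cast_ne_zero.2 (Nat.factorial_ne_zero k)
  have hexp : Real.exp (-(x ^ 2 + a ^ 2) / 2) = Real.exp (-(a^2/2)) * Real.exp (-(x^2/2)) := by
    rw [← Real.exp_add]; ring_nf
  have hpow : (a * x / 2) ^ (2 * k + 0) = (a^2/2)^k * (x^2/2)^k := by
    rw [add_zero, pow_mul, ← mul_pow]
    congr 1
    ring
  rw [gterm, pois, hexp, hpow]
  simp only [add_zero]
  field_simp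

lemma integrableOn_gterm {a b : ℝ} (hb : 0 < b) (k : ℕ) :
    IntegrableOn (gterm a k) (Ioi b) :=
  ((integrableOn_fk hb k).const_mul _)

lemma integral_gterm {a b : ℝ} (hb : 0 < b) (k : ℕ) :
    ∫ x in Ioi b, gterm a k x = pois (a^2/2) k * ppart (k+1) (b^2/2) := by
  simp only [gterm]
  rw [integral_const_mul, integral_fk hb k]
  have hfac : (Nat.factorial k : ℝ) ≠ 0 := Nat.cast_ne_zero.2 (Nat.factorial_ne_zero k)
  field_simp

lemma marcum_eq_sum1 {a b : ℝ} (hb : 0 < b) :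
    marcumQ1 a b = ∑' k, pois (a^2/2) k * ppart (k+1) (b^2/2) := by
  have ht : (0:ℝ) ≤ a^2/2 := by positivity
  have hc : (0:ℝ) ≤ b^2/2 := by positivity
  have hnn : ∀ k, ∀ x ∈ Ioi b, 0 ≤ gterm a k x := by
    intro k x hx
    have hx0 : (0:ℝ) < x := lt_trans hb hx
    have := pois_nonneg ht k
    unfold gterm
    positivity
  have hlin : ∀ k : ℕ, (∫⁻ x in Ioi b, ‖gterm a k x‖₊)
      = ENNReal.ofReal (pois (a^2/2) k * ppart (k+1) (b^2/2)) := by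
    intro k
    have hae : 0 ≤ᵐ[volume.restrict (Ioi b)] gterm a k := by
      rw [Filter.EventuallyLE, ae_restrict_iff' measurableSet_Ioi]
      exact Filter.Eventually.of_forall (fun x hx => hnn k x hx)
    rw [← integral_gterm hb k,
      MeasureTheory.ofReal_integral_eq_lintegral_ofReal (integrableOn_gterm hb k) hae]
    apply lintegral_congr_ae
    filter_upwards [hae] with x hx
    rw [← Real.enorm_eq_ofReal hx]
    exact (enorm_eq_nnnorm _).symm
  have hmeas : ∀ k : ℕ, AEStronglyMeasurable (gterm a k) (volume.restrict (Ioi b)) := by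
    intro k
    apply Continuous.aestronglyMeasurable
    unfold gterm
    continuity
  have hfin : (∑' k : ℕ, ∫⁻ x in Ioi b, ‖gterm a k x‖₊) ≠ ⊤ := by
    have hbound : (∑' k : ℕ, ∫⁻ x in Ioi b, ‖gterm a k x‖₊)
        ≤ ∑' k : ℕ, ENNReal.ofReal (pois (a^2/2) k) := by
      apply ENNReal.tsum_le_tsum
      intro k
      rw [hlin k]
      apply ENNReal.ofReal_le_ofReal
      exact mul_le_of_le_one_right (pois_nonneg ht k) (ppart_le_one hc (k+1))
    have : (∑' k : ℕ, ENNReal.ofReal (pois (a^2/2) k)) = ENNReal.ofReal 1 := by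
      rw [← ENNReal.ofReal_tsum_of_nonneg (fun k => pois_nonneg ht k) (summable_pois _),
        tsum_pois]
    exact ne_top_of_le_ne_top (by simp [this]) hbound
  have key : ∫ x in Ioi b, (∑' k, gterm a k x) = ∑' k, ∫ x in Ioi b, gterm a k x :=
    MeasureTheory.integral_tsum hmeas hfin
  calc marcumQ1 a b = ∫ x in Ioi b, x * Real.exp (-(x ^ 2 + a ^ 2) / 2) * besselI 0 (a * x) := by
        rw [marcumQ1, MeasureTheory.integral_Ici_eq_integral_Ioi]
    _ = ∫ x in Ioi b, (∑' k, gterm a k x) := by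
        apply MeasureTheory.setIntegral_congr_fun measurableSet_Ioi
        intro x _
        exact integrand_eq_tsum a x
    _ = ∑' k, ∫ x in Ioi b, gterm a k x := key
    _ = ∑' k, pois (a^2/2) k * ppart (k+1) (b^2/2) := by
        apply tsum_congr; intro k; exact integral_gterm hb k

lemma tsum_tail (t : ℝ) (j : ℕ) : ∑' m : ℕ, pois t (m + j) = 1 - ppart j t := by
  have h := Summable.sum_add_tsum_nat_add j (summable_pois t)
  rw [tsum_pois] at h
  rw [ppart]
  linarith

lemma sum_swap {t c : ℝ} (ht : 0 ≤ t) (hc : 0 ≤ c) :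
    ∑' k, pois t k * ppart (k+1) c = ∑' j, pois c j * (1 - ppart j t) := by
  set F : ℕ × ℕ → ℝ := fun p => if p.2 ≤ p.1 then pois t p.1 * pois c p.2 else 0 with hF
  have hFnn : ∀ p, 0 ≤ F p := by
    intro p; rw [hF]; dsimp only
    split
    · exact mul_nonneg (pois_nonneg ht _) (pois_nonneg hc _)
    · exact le_refl 0
  have hprod : Summable (fun p : ℕ × ℕ => pois t p.1 * pois c p.2) :=
    (summable_pois t).mul_of_nonneg (summable_pois c) (pois_nonneg ht) (pois_nonneg hc)
  have hsum : Summable F := by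
    apply Summable.of_norm_bounded hprod
    intro p
    rw [Real.norm_of_nonneg (hFnn p), hF]
    dsimp only
    split
    · exact le_refl _
    · exact mul_nonneg (pois_nonneg ht _) (pois_nonneg hc _)
  have hinner1 : ∀ k : ℕ, ∑' j : ℕ, F (k, j) = pois t k * ppart (k+1) c := by
    intro k
    have : ∑' j : ℕ, F (k, j) = ∑ j ∈ Finset.range (k+1), F (k, j) := by
      apply tsum_eq_sum
      intro j hj
      rw [Finset.mem_range, Nat.lt_succ_iff, not_le] at hj
      rw [hF]; simp only; rw [if_neg (by omega)]
    rw [this, ppart, Finset.mul_sum]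
    apply Finset.sum_congr rfl
    intro j hj
    rw [Finset.mem_range, Nat.lt_succ_iff] at hj
    rw [hF]; simp only; rw [if_pos hj]
  have hinner2 : ∀ j : ℕ, ∑' k : ℕ, F (k, j) = pois c j * (1 - ppart j t) := by
    intro j
    have h1 : ∀ k : ℕ, F (k, j) = pois c j * (if j ≤ k then pois t k else 0) := by
      intro k; rw [hF]; dsimp only; split <;> ring
    simp_rw [h1]
    rw [tsum_mul_left]
    congr 1
    have hinj : Function.Injective (fun m : ℕ => m + j) := add_left_injective j
    have hsupp : Function.support (fun x => if j ≤ x then pois t x else 0)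
        ⊆ Set.range (fun m : ℕ => m + j) := by
      intro x hx
      by_cases hjx : j ≤ x
      · exact ⟨x - j, Nat.sub_add_cancel hjx⟩
      · exact absurd (if_neg hjx) hx
    have heq := hinj.tsum_eq (f := fun x => if j ≤ x then pois t x else 0) hsupp
    rw [← heq]
    have hsimp : ∀ m : ℕ, (if j ≤ m + j then pois t (m + j) else 0) = pois t (m + j) := by
      intro m; rw [if_pos (Nat.le_add_left j m)]
    simp only [hsimp]
    exact tsum_tail t j
  have hs1 : ∀ k : ℕ, Summable (fun j => F (k, j)) := by
    intro k
    apply Summable.of_norm_bounded ((summable_pois c).mul_left (pois t k))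
    intro j
    rw [Real.norm_of_nonneg (hFnn (k, j)), hF]
    dsimp only
    split
    · exact le_refl _
    · exact mul_nonneg (pois_nonneg ht _) (pois_nonneg hc _)
  have hs2 : ∀ j : ℕ, Summable (fun k => F (k, j)) := by
    intro j
    apply Summable.of_norm_bounded ((summable_pois t).mul_right (pois c j))
    intro k
    rw [Real.norm_of_nonneg (hFnn (k, j)), hF]
    dsimp only
    split
    · exact le_refl _
    · exact mul_nonneg (pois_nonneg ht _) (pois_nonneg hc _)
  calc ∑' k, pois t k * ppart (k+1) c = ∑' k, ∑' j, F (k, j) := by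
        apply tsum_congr; intro k; exact (hinner1 k).symm
    _ = ∑' p : ℕ × ℕ, F p := (Summable.tsum_prod' hsum hs1).symm
    _ = ∑' p : ℕ × ℕ, F (Prod.swap p) := ((Equiv.prodComm ℕ ℕ).tsum_eq F).symm
    _ = ∑' j, ∑' k, F (k, j) := by
        have hswap : Summable (fun p : ℕ × ℕ => F (Prod.swap p)) :=
          ((Equiv.prodComm ℕ ℕ).summable_iff (f := F)).2 hsum
        exact Summable.tsum_prod' hswap (fun j => hs2 j)
    _ = ∑' j, pois c j * (1 - ppart j t) := by
        apply tsum_congr; intro j; exact hinner2 j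

lemma marcum_eq_sum2 {a b : ℝ} (hb : 0 < b) :
    marcumQ1 a b = ∑' j, pois (b^2/2) j * (1 - ppart j (a^2/2)) := by
  rw [marcum_eq_sum1 hb, sum_swap (by positivity) (by positivity)]

/-- For fixed `b > 0`, the Marcum Q-function `a ↦ Q₁(a,b)` is monotonically
non-decreasing in `a ≥ 0`. -/
theorem marcumQ1_monotone_first_arg (b : ℝ) (hb : 0 < b) :
    MonotoneOn (fun a : ℝ => marcumQ1 a b) (Ici (0:ℝ)) := by
  intro a1 ha1 a2 ha2 h12
  simp only
  rw [marcum_eq_sum2 hb, marcum_eq_sum2 hb]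
  have ha1' : (0:ℝ) ≤ a1 := ha1
  have ha2' : (0:ℝ) ≤ a2 := ha2
  have ht1 : (0:ℝ) ≤ a1^2/2 := by positivity
  have ht2 : (0:ℝ) ≤ a2^2/2 := by positivity
  have hc : (0:ℝ) ≤ b^2/2 := by positivity
  have ht12 : a1^2/2 ≤ a2^2/2 := by
    have := pow_le_pow_left₀ ha1' h12 2
    linarith
  have hsummable : ∀ t : ℝ, 0 ≤ t →
      Summable (fun j => pois (b^2/2) j * (1 - ppart j t)) := by
    intro t ht
    apply Summable.of_nonneg_of_le
      (fun j => mul_nonneg (pois_nonneg hc j) (by have := ppart_le_one ht j; linarith))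
      (fun j => mul_le_of_le_one_right (pois_nonneg hc j)
        (by have := ppart_nonneg ht j; linarith))
      (summable_pois (b^2/2))
  apply Summable.tsum_le_tsum _ (hsummable _ ht1) (hsummable _ ht2)
  intro j
  apply mul_le_mul_of_nonneg_left _ (pois_nonneg hc j)
  have := ppart_antitone j ht1 ht2 ht12
  linarith
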